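/- Hales–Jewett, combined version: given d > 0, K₀ > 0, 0 < L₀ ≤ L and a surjection v₀: [L₀]→[K₀], there exists M ≥ L₀ such that for each d-coloring c of all surjections v: [M']→[K₀] with L₀ ≤ M' ≤ M and v restricted to [L₀] equal to v₀, there exists a rigid surjection s₀: [M]→[L] with s₀ the identity on [L₀] such that c(v₁∘s₀) = c(v₂∘s₀) whenever v₁, v₂: [L']→[K₀] for the same L₀ ≤ L' ≤ L both restrict to v₀ on [L₀] (where ∘ denotes canonical composition). -/

import Mathlib

/-- `f`, viewed as a function `[L] → [K]` (0-based), is a surjection onto `[K]`. -/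
def SurjOn' (L K : ℕ) (f : ℕ → ℕ) : Prop :=
  (∀ y < L, f y < K) ∧ ∀ w < K, ∃ y < L, f y = w

/-- `f : [L] → [K]` is a rigid surjection. -/
def RigidOn (L K : ℕ) (f : ℕ → ℕ) : Prop :=
  SurjOn' L K f ∧ ∀ y < L, ∃ x < K, ∀ w, (∃ z ≤ y, f z = w) ↔ w ≤ x

/-- Domain of the canonical composition with outer codomain size `L` and inner
function `s : [N] → ⬝`: the largest `N₀ ≤ N` with `s y < L` for all `y < N₀`. -/
def cdom (L N : ℕ) (s : ℕ → ℕ) : ℕ :=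
  ((Finset.range N).filter (fun y => ∀ z ≤ y, s z < L)).card

/-- Canonical representative of a function with domain `[n]`: values outside the
domain are set to `0`, so that a coloring sees only the relevant data. -/
def restrict (n : ℕ) (f : ℕ → ℕ) : ℕ → ℕ := fun y => if y < n then f y else 0

private lemma restrict_eq {n : ℕ} {f g : ℕ → ℕ} (h : ∀ y < n, f y = g y) :
    restrict n f = restrict n g := by
  funext y
  unfold restrict
  by_cases hy : y < n
  · simp only [hy, if_true]
    exact h y hy
  · simp [hy]

private lemma cdom_eq (L N : ℕ) (s : ℕ → ℕ) (k : ℕ) (hk : k ≤ N)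
    (h1 : ∀ y < k, s y < L) (h2 : k < N → ¬ s k < L) : cdom L N s = k := by
  unfold cdom
  have hset : (Finset.range N).filter (fun y => ∀ z ≤ y, s z < L) = Finset.range k := by
    ext y
    simp only [Finset.mem_filter, Finset.mem_range]
    constructor
    · rintro ⟨hyN, hy⟩
      by_contra hyk
      push_neg at hyk
      exact h2 (lt_of_le_of_lt hyk hyN) (hy k hyk)
    · intro hyk
      exact ⟨lt_of_lt_of_le hyk hk, fun z hz => h1 z (lt_of_le_of_lt hz hyk)⟩
  rw [hset, Finset.card_range]

/-- Enriched coloring: remembers the color of the word itself together with the colors of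
all its extensions by up to `Ns` extra letters. -/
private def cprime (K₀ Ns : ℕ) {κ : Type} (c : ℕ → (ℕ → ℕ) → κ) :
    ℕ → (ℕ → ℕ) → κ × (Fin (Ns + 1) → (Fin Ns → Fin K₀) → κ) :=
  fun n w => (c n w, fun m x => c (n + (m : ℕ)) (restrict (n + (m : ℕ))
    (fun y => if y < n then w y else if h : y - n < Ns then ((x ⟨y - n, h⟩ : Fin K₀) : ℕ) else 0)))

private lemma cprime_snd {κ : Type} (c : ℕ → (ℕ → ℕ) → κ) (K₀ Ns n m : ℕ)
    (hm : m < Ns + 1) (x : Fin Ns → Fin K₀) (w : ℕ → ℕ) :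
    (cprime K₀ Ns c n w).2 ⟨m, hm⟩ x =
      c (n + m) (restrict (n + m)
        (fun y => if y < n then w y else if h : y - n < Ns then ((x ⟨y - n, h⟩ : Fin K₀) : ℕ) else 0)) :=
  rfl

private theorem hj_aux (K₀ L₀ : ℕ) (hK₀ : 0 < K₀) (hL₀ : 0 < L₀) (v₀ : ℕ → ℕ)
    (hv₀ : SurjOn' L₀ K₀ v₀) :
    ∀ L, L₀ ≤ L → ∀ (κ : Type) (_ : Finite κ),
      ∃ M, L₀ ≤ M ∧ ∀ c : ℕ → (ℕ → ℕ) → κ,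
        ∃ s₀ : ℕ → ℕ, RigidOn M L s₀ ∧ (∀ y < L₀, s₀ y = y) ∧
          ∀ L' (v₁ v₂ : ℕ → ℕ), L₀ ≤ L' → L' ≤ L →
            SurjOn' L' K₀ v₁ → SurjOn' L' K₀ v₂ →
            (∀ y < L₀, v₁ y = v₀ y) → (∀ y < L₀, v₂ y = v₀ y) →
            c (cdom L' M s₀) (restrict (cdom L' M s₀) (fun y => v₁ (s₀ y))) =
              c (cdom L' M s₀) (restrict (cdom L' M s₀) (fun y => v₂ (s₀ y))) := by
  intro L hL
  induction L, hL using Nat.le_induction with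
  | base =>
      intro κ hκ
      refine ⟨L₀, le_rfl, fun c => ⟨fun y => y, ?_, fun y _ => rfl, ?_⟩⟩
      · exact ⟨⟨fun y hy => hy, fun w hw => ⟨w, hw, rfl⟩⟩,
          fun y hy => ⟨y, hy, fun w =>
            ⟨fun ⟨z, hz, he⟩ => he ▸ hz, fun hw => ⟨w, hw, rfl⟩⟩⟩⟩
      · intro L' v₁ v₂ h1 h2 _ _ he₁ he₂
        have hn : cdom L' L₀ (fun y => y) ≤ L₀ := by
          unfold cdom
          exact le_trans (Finset.card_filter_le _ _) (le_of_eq (Finset.card_range _))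
        refine congrArg _ (restrict_eq fun y hy => ?_)
        have hyL : y < L₀ := lt_of_lt_of_le hy hn
        exact (he₁ y hyL).trans (he₂ y hyL).symm
  | succ L hLL ih =>
      intro κ hκ
      haveI := hκ
      obtain ⟨Ns, hNs⟩ :=
        Combinatorics.Subspace.exists_mono_in_high_dimension_fin (Fin K₀) κ Unit
      obtain ⟨M₁, hM₁, hIH⟩ :=
        ih (κ × (Fin (Ns + 1) → (Fin Ns → Fin K₀) → κ)) inferInstance
      have hL1 : 1 ≤ L := le_trans hL₀ hLL
      refine ⟨M₁ + Ns, le_trans hM₁ (Nat.le_add_right _ _), fun c => ?_⟩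
      obtain ⟨σ, hσrig, hσid, hσ⟩ := hIH (cprime K₀ Ns c)
      obtain ⟨⟨hσbd, hσsurj⟩, hσrig2⟩ := hσrig
      have hcdL : cdom L M₁ σ = M₁ :=
        cdom_eq L M₁ σ M₁ le_rfl (fun y hy => hσbd y hy) (fun h => absurd h (lt_irrefl _))
      -- the canonical admissible word of length L
      set u : ℕ → ℕ := fun y => if y < L₀ then v₀ y else 0 with hudef
      have hu_surj : SurjOn' L K₀ u := by
        constructor
        · intro y _
          rw [hudef]
          by_cases hy : y < L₀
          · simp only [hy, if_true]
            exact hv₀.1 y hy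
          · simp only [hy, if_false]
            exact hK₀
        · intro w hw
          obtain ⟨z, hz, hzv⟩ := hv₀.2 w hw
          refine ⟨z, lt_of_lt_of_le hz hLL, ?_⟩
          rw [hudef]
          simp only [hz, if_true]
          exact hzv
      have hu_ext : ∀ y < L₀, u y = v₀ y := by
        intro y hy
        rw [hudef]
        simp [hy]
      -- the coloring for the Hales-Jewett step
      set C : (Fin Ns → Fin K₀) → κ :=
        fun x => (cprime K₀ Ns c M₁ (restrict M₁ (fun y => u (σ y)))).2
          ⟨Ns, Nat.lt_succ_self Ns⟩ x with hCdef
      obtain ⟨ℓ, k₀, hk₀⟩ := hNs C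
      -- fixed letters realised inside `[L₀]`
      have hzfex : ∀ a : Fin K₀, ∃ z, z < L₀ ∧ v₀ z = (a : ℕ) := fun a => hv₀.2 a a.isLt
      set zf : Fin K₀ → ℕ := fun a => (hzfex a).choose with hzfdef
      have hzf1 : ∀ a, zf a < L₀ := fun a => (hzfex a).choose_spec.1
      have hzf2 : ∀ a, v₀ (zf a) = (a : ℕ) := fun a => (hzfex a).choose_spec.2
      -- the suffix values
      set sval : Fin Ns → ℕ :=
        fun j => Sum.elim (fun a : Fin K₀ => zf a) (fun _ : Unit => L) (ℓ.idxFun j) with hsvaldef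
      have hex : ∃ j : ℕ, ∃ h : j < Ns, ℓ.idxFun ⟨j, h⟩ = Sum.inr () := by
        obtain ⟨i, hi⟩ := ℓ.proper ()
        exact ⟨i.1, i.2, hi⟩
      set j₀ := Nat.find hex with hj₀def
      obtain ⟨hj₀Ns, hj₀inr⟩ := Nat.find_spec hex
      have hj₀min : ∀ j (h : j < Ns), j < j₀ → ∃ a, ℓ.idxFun ⟨j, h⟩ = Sum.inl a := by
        intro j h hj
        rcases hh : ℓ.idxFun ⟨j, h⟩ with a | e
        · exact ⟨a, rfl⟩
        · exact absurd ⟨h, by cases e; exact hh⟩ (Nat.find_min hex hj)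
      -- the rigid surjection
      set s₀ : ℕ → ℕ :=
        fun y => if y < M₁ then σ y else if h : y - M₁ < Ns then sval ⟨y - M₁, h⟩ else 0
        with hs₀def
      have hs₀σ : ∀ y < M₁, s₀ y = σ y := by
        intro y hy
        rw [hs₀def]
        simp [hy]
      have hs₀suf' : ∀ y (h1 : ¬ y < M₁) (h2 : y - M₁ < Ns), s₀ y = sval ⟨y - M₁, h2⟩ := by
        intro y h1 h2
        rw [hs₀def]
        simp [h1, h2]
      have hs₀suf : ∀ (j : ℕ) (h : j < Ns), s₀ (M₁ + j) = sval ⟨j, h⟩ := by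
        intro j h
        have h1 : ¬ (M₁ + j < M₁) := by omega
        have h2 : (M₁ + j) - M₁ < Ns := by omega
        rw [hs₀suf' (M₁ + j) h1 h2]
        exact congrArg sval (Fin.ext (show M₁ + j - M₁ = j by omega))
      have hsval_lt : ∀ j : Fin Ns, sval j < L + 1 := by
        intro j
        rw [hsvaldef]
        rcases hh : ℓ.idxFun j with a | e
        · have := hzf1 a
          simp only [hh, Sum.elim_inl]
          omega
        · simp [hh]
      have hs₀lt : ∀ y < M₁ + Ns, s₀ y < L + 1 := by
        intro y hy
        by_cases h1 : y < M₁
        · have := hσbd y h1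
          rw [hs₀σ y h1]
          omega
        · have h2 : y - M₁ < Ns := by omega
          rw [hs₀suf' y h1 h2]
          exact hsval_lt _
      have hs₀surj : ∀ w < L + 1, ∃ z < M₁ + Ns, s₀ z = w := by
        intro w hw
        by_cases hwL : w < L
        · obtain ⟨z, hz, hzw⟩ := hσsurj w hwL
          exact ⟨z, by omega, by rw [hs₀σ z hz]; exact hzw⟩
        · have hwe : w = L := by omega
          refine ⟨M₁ + j₀, by omega, ?_⟩
          rw [hs₀suf j₀ hj₀Ns, hwe, hsvaldef]
          simp [show ℓ.idxFun ⟨j₀, hj₀Ns⟩ = Sum.inr () from hj₀inr]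
      have hrig : ∀ y < M₁ + Ns, ∃ x < L + 1, ∀ w, (∃ z ≤ y, s₀ z = w) ↔ w ≤ x := by
        intro y hy
        by_cases h1 : y < M₁
        · obtain ⟨x, hx, hiff⟩ := hσrig2 y h1
          refine ⟨x, by omega, fun w => Iff.trans ?_ (hiff w)⟩
          exact exists_congr fun z => and_congr_right fun hz => by
            rw [hs₀σ z (by omega)]
        · by_cases hasL : ∃ z, z ≤ y ∧ s₀ z = L
          · refine ⟨L, Nat.lt_succ_self L, fun w => ?_⟩
            constructor
            · rintro ⟨z, hz, he⟩
              have := hs₀lt z (by omega)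
              omega
            · intro hw
              rcases Nat.lt_or_ge w L with hwL | hwL
              · obtain ⟨z, hzM, hze⟩ := hσsurj w hwL
                exact ⟨z, by omega, by rw [hs₀σ z hzM]; exact hze⟩
              · have hwe : w = L := by omega
                subst hwe
                exact hasL
          · refine ⟨L - 1, by omega, fun w => ?_⟩
            constructor
            · rintro ⟨z, hz, he⟩
              have h3 := hs₀lt z (by omega)
              have h4 : s₀ z ≠ L := fun hh => hasL ⟨z, hz, hh⟩
              omega
            · intro hw
              have hwL : w < L := by omega
              obtain ⟨z, hzM, hze⟩ := hσsurj w hwL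
              exact ⟨z, by omega, by rw [hs₀σ z hzM]; exact hze⟩
      refine ⟨s₀, ⟨⟨hs₀lt, hs₀surj⟩, hrig⟩, ?_, ?_⟩
      · intro y hy
        rw [hs₀σ y (by omega)]
        exact hσid y hy
      · intro L' v₁ v₂ hL'1 hL'2 hsv₁ hsv₂ he₁ he₂
        rcases (by omega : L' < L ∨ L' = L ∨ L' = L + 1) with hcase | hcase | hcase
        · -- low levels
          have hfilter : cdom L' (M₁ + Ns) s₀ = cdom L' M₁ σ := by
            unfold cdom
            congr 1
            ext yy
            simp only [Finset.mem_filter, Finset.mem_range]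
            constructor
            · rintro ⟨hyN, hy⟩
              have hyM₁ : yy < M₁ := by
                by_contra hcc
                push_neg at hcc
                obtain ⟨z, hz, hze⟩ := hσsurj (L - 1) (by omega)
                have hzy := hy z (by omega)
                rw [hs₀σ z hz] at hzy
                omega
              exact ⟨hyM₁, fun z hz => by rw [← hs₀σ z (by omega)]; exact hy z hz⟩
            · rintro ⟨hyM₁, hy⟩
              exact ⟨by omega, fun z hz => by rw [hs₀σ z (by omega)]; exact hy z hz⟩
          have hcle : cdom L' M₁ σ ≤ M₁ := by
            unfold cdom
            exact le_trans (Finset.card_filter_le _ _) (le_of_eq (Finset.card_range _))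
          have hw1 : restrict (cdom L' M₁ σ) (fun y => v₁ (s₀ y)) =
              restrict (cdom L' M₁ σ) (fun y => v₁ (σ y)) :=
            restrict_eq fun y hy => by rw [hs₀σ y (by omega)]
          have hw2 : restrict (cdom L' M₁ σ) (fun y => v₂ (s₀ y)) =
              restrict (cdom L' M₁ σ) (fun y => v₂ (σ y)) :=
            restrict_eq fun y hy => by rw [hs₀σ y (by omega)]
          rw [hfilter, hw1, hw2]
          exact congrArg Prod.fst (hσ L' v₁ v₂ hL'1 (by omega) hsv₁ hsv₂ he₁ he₂)
        · -- level L
          subst hcase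
          have hfix : ∀ (j : ℕ) (h : j < Ns), j < j₀ → s₀ (M₁ + j) < L' := by
            intro j h hj
            obtain ⟨a, ha⟩ := hj₀min j h hj
            have hsv : sval ⟨j, h⟩ = zf a := by rw [hsvaldef]; simp [ha]
            rw [hs₀suf j h, hsv]
            exact lt_of_lt_of_le (hzf1 a) hLL
          have hcdM : cdom L' (M₁ + Ns) s₀ = M₁ + j₀ := by
            refine cdom_eq _ _ _ _ (by omega) ?_ ?_
            · intro y hy
              by_cases h1 : y < M₁
              · rw [hs₀σ y h1]; exact hσbd y h1
              · have h2 : y - M₁ < j₀ := by omega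
                have h2' : y - M₁ < Ns := by omega
                have h3 : y = M₁ + (y - M₁) := by omega
                rw [h3]
                exact hfix (y - M₁) h2' h2
            · intro hlt hcon
              rw [hs₀suf j₀ hj₀Ns] at hcon
              have : sval ⟨j₀, hj₀Ns⟩ = L' := by rw [hsvaldef]; simp [show ℓ.idxFun ⟨j₀, hj₀Ns⟩ = Sum.inr () from hj₀inr]
              omega
          set xf : Fin Ns → Fin K₀ :=
            fun j => Sum.elim id (fun _ : Unit => (⟨0, hK₀⟩ : Fin K₀)) (ℓ.idxFun j) with hxfdef
          have hword : ∀ v : ℕ → ℕ, (∀ y < L₀, v y = v₀ y) →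
              restrict (M₁ + j₀) (fun y => v (s₀ y)) =
              restrict (M₁ + j₀) (fun y => if y < M₁ then restrict M₁ (fun z => v (σ z)) y
                else if h : y - M₁ < Ns then ((xf ⟨y - M₁, h⟩ : Fin K₀) : ℕ) else 0) := by
            intro v hv
            apply restrict_eq
            intro y hy
            by_cases h1 : y < M₁
            · rw [hs₀σ y h1]
              simp [restrict, h1]
            · have h2 : y - M₁ < j₀ := by omega
              have h2' : y - M₁ < Ns := by omega
              obtain ⟨a, ha⟩ := hj₀min (y - M₁) h2' h2
              have hsv : sval ⟨y - M₁, h2'⟩ = zf a := by rw [hsvaldef]; simp [ha]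
              have hxa : xf ⟨y - M₁, h2'⟩ = a := by rw [hxfdef]; simp [ha]
              rw [hs₀suf' y h1 h2', hsv, hv _ (hzf1 a), hzf2 a]
              simp [h1, h2', hxa]
          have hEQ := hσ L' v₁ v₂ hL'1 le_rfl hsv₁ hsv₂ he₁ he₂
          rw [hcdL] at hEQ
          have hEQ2 := congrFun (congrFun (congrArg Prod.snd hEQ) ⟨j₀, by omega⟩) xf
          rw [cprime_snd, cprime_snd] at hEQ2
          rw [hcdM, hword v₁ he₁, hword v₂ he₂]
          exact hEQ2
        · -- level L + 1
          subst hcase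
          have hcdM : cdom (L + 1) (M₁ + Ns) s₀ = M₁ + Ns :=
            cdom_eq _ _ _ _ le_rfl (fun y hy => hs₀lt y hy) (fun h => absurd h (lt_irrefl _))
          have hlev : ∀ v : ℕ → ℕ, SurjOn' (L + 1) K₀ v → (∀ y < L₀, v y = v₀ y) →
              SurjOn' L K₀ v := by
            intro v hs hvext
            constructor
            · intro y hy
              exact hs.1 y (by omega)
            · intro w hw
              obtain ⟨z, hz, hzv⟩ := hv₀.2 w hw
              exact ⟨z, by omega, by rw [hvext z hz]; exact hzv⟩
          have hword : ∀ (v : ℕ → ℕ) (b : Fin K₀), v L = (b : ℕ) → (∀ y < L₀, v y = v₀ y) →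
              restrict (M₁ + Ns) (fun y => v (s₀ y)) =
              restrict (M₁ + Ns) (fun y => if y < M₁ then restrict M₁ (fun z => v (σ z)) y
                else if h : y - M₁ < Ns then (((ℓ (fun _ => b)) ⟨y - M₁, h⟩ : Fin K₀) : ℕ) else 0) := by
            intro v b hvb hv
            apply restrict_eq
            intro y hy
            by_cases h1 : y < M₁
            · rw [hs₀σ y h1]
              simp [restrict, h1]
            · have h2 : y - M₁ < Ns := by omega
              rcases hh : ℓ.idxFun ⟨y - M₁, h2⟩ with a | e
              · have hsv : sval ⟨y - M₁, h2⟩ = zf a := by rw [hsvaldef]; simp [hh]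
                have hr : (ℓ (fun _ => b)) ⟨y - M₁, h2⟩ = a := Combinatorics.Subspace.apply_inl hh
                rw [hs₀suf' y h1 h2, hsv, hv _ (hzf1 a), hzf2 a]
                simp [h1, h2, hr]
              · have hsv : sval ⟨y - M₁, h2⟩ = L := by rw [hsvaldef]; simp [hh]
                have hr : (ℓ (fun _ => b)) ⟨y - M₁, h2⟩ = b := by
                  rw [Combinatorics.Subspace.apply_inr hh]
                rw [hs₀suf' y h1 h2, hsv, hvb]
                simp [h1, h2, hr]
          have hone : ∀ v : ℕ → ℕ, SurjOn' (L + 1) K₀ v → (∀ y < L₀, v y = v₀ y) →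
              c (M₁ + Ns) (restrict (M₁ + Ns) (fun y => v (s₀ y))) = k₀ := by
            intro v hs hvext
            have hb : v L < K₀ := hs.1 L (by omega)
            set b : Fin K₀ := ⟨v L, hb⟩ with hbdef
            have hEQ := hσ L v u hLL le_rfl (hlev v hs hvext) hu_surj hvext hu_ext
            rw [hcdL] at hEQ
            have hEQ2 := congrFun (congrFun (congrArg Prod.snd hEQ)
              ⟨Ns, Nat.lt_succ_self Ns⟩) (ℓ (fun _ => b))
            rw [cprime_snd, cprime_snd] at hEQ2
            have hvbe : v L = (b : ℕ) := rfl
            rw [hword v b hvbe hvext, hEQ2]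
            have hCr : c (M₁ + Ns) (restrict (M₁ + Ns)
                (fun y => if y < M₁ then restrict M₁ (fun z => u (σ z)) y
                  else if h : y - M₁ < Ns then
                    (((ℓ (fun _ => b)) ⟨y - M₁, h⟩ : Fin K₀) : ℕ) else 0)) =
                C (ℓ (fun _ => b)) := by
              simp only [hCdef]
              rw [cprime_snd]
            rw [hCr]
            exact hk₀ (fun _ => b)
          rw [hcdM]
          rw [hone v₁ hsv₁ he₁, hone v₂ hsv₂ he₂]



/-- Hales–Jewett, combined version: given `d > 0`, `K₀ > 0`, `0 < L₀ ≤ L` and a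
surjection `v₀ : [L₀] → [K₀]`, there is `M ≥ L₀` such that for each `d`-coloring `c`
of all surjections `v : [M'] → [K₀]` with `L₀ ≤ M' ≤ M` extending `v₀`, there is a
rigid surjection `s₀ : [M] → [L]` which is the identity on `[L₀]` such that
`c(v₁ ∘ s₀) = c(v₂ ∘ s₀)` whenever `v₁, v₂ : [L'] → [K₀]` (same `L₀ ≤ L' ≤ L`) both
restrict to `v₀` on `[L₀]`; here `∘` is the canonical composition, whose domain is
`cdom L' M s₀`, and a coloring is applied to the pair (domain size, function). -/
theorem hales_jewett_combined (d K₀ L₀ L : ℕ) (hd : 0 < d) (hK₀ : 0 < K₀)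
    (hL₀ : 0 < L₀) (hL₀L : L₀ ≤ L) (v₀ : ℕ → ℕ) (hv₀ : SurjOn' L₀ K₀ v₀) :
    ∃ M, L₀ ≤ M ∧ ∀ c : ℕ → (ℕ → ℕ) → Fin d,
      ∃ s₀ : ℕ → ℕ, RigidOn M L s₀ ∧ (∀ y < L₀, s₀ y = y) ∧
        ∀ L' (v₁ v₂ : ℕ → ℕ), L₀ ≤ L' → L' ≤ L →
          SurjOn' L' K₀ v₁ → SurjOn' L' K₀ v₂ →
          (∀ y < L₀, v₁ y = v₀ y) → (∀ y < L₀, v₂ y = v₀ y) →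
          c (cdom L' M s₀) (restrict (cdom L' M s₀) (fun y => v₁ (s₀ y))) =
            c (cdom L' M s₀) (restrict (cdom L' M s₀) (fun y => v₂ (s₀ y))) := by
  obtain ⟨M, hM, h⟩ := hj_aux K₀ L₀ hK₀ hL₀ v₀ hv₀ L hL₀L (Fin d) inferInstance
  exact ⟨M, hM, h⟩
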